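/- Let L = {g ∈ Γ′ : π_g = 1 and g_1 ∈ Γ′ and g_2 ∈ Γ′} (the preimage of Γ′ × Γ′ under the wreath decomposition). Then L is a normal subgroup of Γ′ and the quotient Γ′/L is infinite cyclic, generated by the image of the commutator c = [a,b] = a⁻¹b⁻¹ab. -/

import Mathlib

namespace PinkGroup

mutual
  /-- forward action of the generator `a` -/
  def aF : List Bool → List Bool
    | [] => []
    | false :: w => true :: bF w
    | true :: w => false :: w
  /-- forward action of the generator `b` -/
  def bF : List Bool → List Bool
    | [] => []
    | false :: w => false :: aF w
    | true :: w => true :: w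
end

mutual
  /-- inverse of `aF` -/
  def aIF : List Bool → List Bool
    | [] => []
    | true :: w => false :: bIF w
    | false :: w => true :: w
  /-- inverse of `bF` -/
  def bIF : List Bool → List Bool
    | [] => []
    | false :: w => false :: aIF w
    | true :: w => true :: w
end

lemma inv_all (w : List Bool) :
    aF (aIF w) = w ∧ bF (bIF w) = w ∧ aIF (aF w) = w ∧ bIF (bF w) = w := by
  induction w with
  | nil => simp [aF, bF, aIF, bIF]
  | cons x w ih =>
    cases x <;>
      simp [aF, bF, aIF, bIF, ih.1, ih.2.1, ih.2.2.1, ih.2.2.2]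

/-- The generator `a` of Pink's group: `(1w)^a = 2 w^b`, `(2w)^a = 1w`
(where the letter `1` is `false` and the letter `2` is `true`). -/
def a : Equiv.Perm (List Bool) :=
  ⟨aF, aIF, fun w => (inv_all w).2.2.1, fun w => (inv_all w).1⟩

/-- The generator `b` of Pink's group: `(1w)^b = 1 w^a`, `(2w)^b = 2w`. -/
def b : Equiv.Perm (List Bool) :=
  ⟨bF, bIF, fun w => (inv_all w).2.2.2, fun w => (inv_all w).2.1⟩

/-- Pink's group `Γ`, the iterated monodromy group of `z^2 - 1`. -/
def Gam : Subgroup (Equiv.Perm (List Bool)) := Subgroup.closure {a, b}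

lemma a_mem : a ∈ Gam := Subgroup.subset_closure (by simp)

lemma b_mem : b ∈ Gam := Subgroup.subset_closure (by simp)


/-- The derived subgroup `Γ'` of `Γ`, as a subgroup of the permutation group. -/
def GamDer : Subgroup (Equiv.Perm (List Bool)) := ⁅Gam, Gam⁆

/-- The subgroup `L = {g ∈ Γ' : π_g = 1, g₁ ∈ Γ', g₂ ∈ Γ'}`, the preimage of `Γ' × Γ'`
under the wreath decomposition: `g ∈ L` iff `g(xw) = x (k_x w)` for sections `k_x ∈ Γ'`. -/
def Lsub : Subgroup ↥GamDer where
  carrier := {g | ∀ x : Bool, ∃ k ∈ GamDer,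
    ∀ w : List Bool, (g : Equiv.Perm (List Bool)) (x :: w) = x :: k w}
  one_mem' := fun x => ⟨1, one_mem _, fun w => by simp⟩
  mul_mem' := by
    intro g h hg hh x
    obtain ⟨kg, hkgK, hkg⟩ := hg x
    obtain ⟨kh, hkhK, hkh⟩ := hh x
    exact ⟨kg * kh, mul_mem hkgK hkhK, fun w => by
      rw [Subgroup.coe_mul, Equiv.Perm.mul_apply, hkh w, hkg (kh w), Equiv.Perm.mul_apply]⟩
  inv_mem' := by
    intro g hg x
    obtain ⟨k, hkK, hk⟩ := hg x
    refine ⟨k⁻¹, inv_mem hkK, fun w => ?_⟩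
    have h1 : (g : Equiv.Perm (List Bool)) (x :: k⁻¹ w) = x :: w := by
      rw [hk, ← Equiv.Perm.mul_apply, mul_inv_cancel, Equiv.Perm.one_apply]
    rw [← h1]
    simp

/-- `c = [a,b] = a⁻¹b⁻¹ab` (the paper's commutator convention). -/
def cc : Equiv.Perm (List Bool) := a⁻¹ * b⁻¹ * a * b

lemma cc_mem_GamDer : cc ∈ GamDer := by
  have h := Subgroup.commutator_mem_commutator (inv_mem a_mem) (inv_mem b_mem)
  simpa [GamDer, cc, commutatorElement_def, mul_assoc] using h

-- ===== auxiliary development =====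

open scoped commutatorElement

lemma a_nil : a [] = [] := rfl
lemma b_nil : b [] = [] := rfl
lemma a_false (w : List Bool) : a (false :: w) = true :: b w := rfl
lemma a_true (w : List Bool) : a (true :: w) = false :: w := rfl
lemma b_false (w : List Bool) : b (false :: w) = false :: a w := rfl
lemma b_true (w : List Bool) : b (true :: w) = true :: w := rfl

/-- The "wreath-structured" subgroup: permutations fixing `[]` which act on first letters
through a permutation of `{false,true}` and whose sections lie in `Γ`. -/
def W : Subgroup (Equiv.Perm (List Bool)) where
  carrier := {g | g [] = [] ∧ ∃ s : Bool, ∃ k : Bool → Equiv.Perm (List Bool),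
      (∀ x, k x ∈ Gam) ∧ ∀ x w, g (x :: w) = xor s x :: k (xor s x) w}
  one_mem' := ⟨rfl, false, fun _ => 1, fun _ => one_mem _, by intro x w; simp⟩
  mul_mem' := by
    rintro g h ⟨g0, s, k, hkG, hk⟩ ⟨h0, s', k', hk'G, hk'⟩
    refine ⟨by simp [Equiv.Perm.mul_apply, h0, g0], xor s s',
      fun y => k y * k' (xor s y), fun y => mul_mem (hkG y) (hk'G (xor s y)), ?_⟩
    intro x w
    rw [Equiv.Perm.mul_apply, hk' x w, hk]
    cases s <;> cases s' <;> cases x <;> simp [Equiv.Perm.mul_apply]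
  inv_mem' := by
    rintro g ⟨g0, s, k, hkG, hk⟩
    refine ⟨(Equiv.Perm.inv_eq_iff_eq).2 g0.symm, s,
      fun y => (k (xor s y))⁻¹, fun y => inv_mem (hkG (xor s y)), ?_⟩
    intro x w
    apply g.injective
    rw [← Equiv.Perm.mul_apply, mul_inv_cancel, Equiv.Perm.one_apply, hk]
    cases s <;> cases x <;> simp

lemma a_mem_W : a ∈ W := by
  refine ⟨rfl, true, fun y => if y then b else 1, ?_, ?_⟩
  · intro x; cases x <;> simp [a_mem, b_mem, one_mem]
  · intro x w; cases x <;> simp [a_false, a_true]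

lemma b_mem_W : b ∈ W := by
  refine ⟨rfl, false, fun y => if y then 1 else a, ?_, ?_⟩
  · intro x; cases x <;> simp [a_mem, b_mem, one_mem]
  · intro x w; cases x <;> simp [b_false, b_true]

lemma gam_le_W : Gam ≤ W := by
  rw [Gam, Subgroup.closure_le]
  rintro x (rfl | rfl)
  exacts [a_mem_W, b_mem_W]

lemma mem_W {g : Equiv.Perm (List Bool)} (h : g ∈ W) :
    g [] = [] ∧ ∃ s : Bool, ∃ k : Bool → Equiv.Perm (List Bool),
      (∀ x, k x ∈ Gam) ∧ ∀ x w, g (x :: w) = xor s x :: k (xor s x) w := h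

/-- the root letter-swap datum of `g ∈ W` -/
noncomputable def sW (g : ↥W) : Bool := (mem_W g.2).2.choose

/-- the sections of `g ∈ W`, as permutations -/
noncomputable def kWp (g : ↥W) : Bool → Equiv.Perm (List Bool) :=
  (mem_W g.2).2.choose_spec.choose

lemma kWp_mem (g : ↥W) (y : Bool) : kWp g y ∈ Gam :=
  (mem_W g.2).2.choose_spec.choose_spec.1 y

lemma W_spec (g : ↥W) (x : Bool) (w : List Bool) :
    (g : Equiv.Perm (List Bool)) (x :: w) = xor (sW g) x :: kWp g (xor (sW g) x) w :=
  (mem_W g.2).2.choose_spec.choose_spec.2 x w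

lemma W_nil (g : ↥W) : (g : Equiv.Perm (List Bool)) [] = [] := (mem_W g.2).1

/-- sections of `g ∈ W` as elements of `Γ` -/
noncomputable def kW (g : ↥W) (y : Bool) : ↥Gam := ⟨kWp g y, kWp_mem g y⟩

lemma W_unique (g : ↥W) {s : Bool} {k : Bool → Equiv.Perm (List Bool)}
    (hk : ∀ x w, (g : Equiv.Perm (List Bool)) (x :: w) = xor s x :: k (xor s x) w) :
    sW g = s ∧ ∀ y, kWp g y = k y := by
  have hs : sW g = s := by
    have h1 := W_spec g false []
    rw [hk] at h1
    injection h1 with h1h _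
    simpa using h1h.symm
  refine ⟨hs, fun y => ?_⟩
  apply Equiv.ext
  intro w
  have h2 := W_spec g (xor s y) w
  rw [hk, hs] at h2
  have h3 : xor s (xor s y) = y := by cases s <;> cases y <;> rfl
  rw [h3] at h2
  injection h2 with _ h2t
  exact h2t.symm

lemma W_mul_data (g h : ↥W) :
    sW (g * h) = xor (sW g) (sW h) ∧
      ∀ y, kWp (g * h) y = kWp g y * kWp h (xor (sW g) y) := by
  apply W_unique
  intro x w
  rw [Subgroup.coe_mul, Equiv.Perm.mul_apply, W_spec h x w, W_spec g]
  cases hg : sW g <;> cases hh : sW h <;> cases x <;>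
    simp [Equiv.Perm.mul_apply]

lemma W_inv_data (g : ↥W) :
    sW g⁻¹ = sW g ∧ ∀ y, kWp g⁻¹ y = (kWp g (xor (sW g) y))⁻¹ := by
  apply W_unique
  intro x w
  apply (g : Equiv.Perm (List Bool)).injective
  rw [show ((g⁻¹ : ↥W) : Equiv.Perm (List Bool)) = (g : Equiv.Perm (List Bool))⁻¹ from rfl,
    ← Equiv.Perm.mul_apply, mul_inv_cancel, Equiv.Perm.one_apply, W_spec g]
  cases hg : sW g <;> cases x <;> simp

lemma W_one_data : sW (1 : ↥W) = false ∧ ∀ y, kWp (1 : ↥W) y = 1 := by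
  apply W_unique
  intro x w
  simp

/-- `a` as an element of `W` -/
def aW : ↥W := ⟨a, a_mem_W⟩
/-- `b` as an element of `W` -/
def bW : ↥W := ⟨b, b_mem_W⟩

lemma W_a_data : sW aW = true ∧ ∀ y, kWp aW y = if y then b else 1 := by
  apply W_unique
  intro x w
  cases x <;> simp [aW, a_false, a_true]

lemma W_b_data : sW bW = false ∧ ∀ y, kWp bW y = if y then 1 else a := by
  apply W_unique
  intro x w
  cases x <;> simp [bW, b_false, b_true]

/-- the parity homomorphism (root action) -/
noncomputable def Rhat : ↥W →* Multiplicative (ZMod 2) where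
  toFun g := Multiplicative.ofAdd (if sW g then 1 else 0)
  map_one' := by
    show Multiplicative.ofAdd (if sW (1 : ↥W) then 1 else 0) = 1
    rw [W_one_data.1]; rfl
  map_mul' g h := by
    show Multiplicative.ofAdd (if sW (g * h) then 1 else 0)
      = Multiplicative.ofAdd (if sW g then 1 else 0) * Multiplicative.ofAdd (if sW h then 1 else 0)
    rw [(W_mul_data g h).1]
    cases hg : sW g <;> cases hh : sW h <;> rfl

/-- abelianization of `Γ` -/
abbrev A := Abelianization ↥Gam

/-- class of the first section times class of the second section: a homomorphism on `W`. -/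
noncomputable def Theta : ↥W →* A where
  toFun g := Abelianization.of (kW g false) * Abelianization.of (kW g true)
  map_one' := by
    have h : ∀ y, kW (1 : ↥W) y = 1 := fun y => Subtype.ext (W_one_data.2 y)
    show Abelianization.of (kW 1 false) * Abelianization.of (kW 1 true) = 1
    rw [h, h, map_one, mul_one]
  map_mul' g h := by
    have e : ∀ y, kW (g * h) y = kW g y * kW h (xor (sW g) y) :=
      fun y => Subtype.ext ((W_mul_data g h).2 y)
    show Abelianization.of (kW (g * h) false) * Abelianization.of (kW (g * h) true) = _
    simp only [e, map_mul]
    cases hg : sW g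
    · simpa using mul_mul_mul_comm (Abelianization.of (kW g false))
        (Abelianization.of (kW h false)) (Abelianization.of (kW g true))
        (Abelianization.of (kW h true))
    · simp only [Bool.true_xor, Bool.not_false, Bool.not_true]
      rw [mul_mul_mul_comm, mul_comm (Abelianization.of (kW h true))]

/-- any homomorphism from a subgroup containing `Γ` into a commutative group
kills the derived subgroup `Γ'`. -/
lemma killed {H : Subgroup (Equiv.Perm (List Bool))} (hGH : Gam ≤ H)
    {M : Type} [CommGroup M] (f : ↥H →* M) {g : Equiv.Perm (List Bool)}
    (hg : g ∈ GamDer) : ∃ hH : g ∈ H, f ⟨g, hH⟩ = 1 := by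
  have hle : GamDer ≤ Subgroup.map H.subtype (MonoidHom.ker f) := by
    rw [GamDer, Subgroup.commutator_le]
    intro g1 h1g g2 h2g
    refine Subgroup.mem_map.2 ⟨⁅(⟨g1, hGH h1g⟩ : ↥H), (⟨g2, hGH h2g⟩ : ↥H)⁆, ?_, rfl⟩
    rw [MonoidHom.mem_ker, map_commutatorElement]
    exact commutatorElement_eq_one_iff_commute.2 (mul_comm _ _)
  obtain ⟨w, hwker, hweq⟩ := hle hg
  have hH : g ∈ H := hweq ▸ w.2
  refine ⟨hH, ?_⟩
  have hsub : (⟨g, hH⟩ : ↥H) = w := Subtype.ext hweq.symm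
  rw [hsub]
  exact hwker

/-- `a` as an element of `Γ` -/
def aG : ↥Gam := ⟨a, a_mem⟩
/-- `b` as an element of `Γ` -/
def bG : ↥Gam := ⟨b, b_mem⟩

lemma kW_a_false : kW aW false = 1 :=
  Subtype.ext (show kWp aW false = 1 by rw [W_a_data.2 false]; rfl)
lemma kW_a_true : kW aW true = bG :=
  Subtype.ext (show kWp aW true = b by rw [W_a_data.2 true]; rfl)
lemma kW_b_false : kW bW false = aG :=
  Subtype.ext (show kWp bW false = a by rw [W_b_data.2 false]; rfl)
lemma kW_b_true : kW bW true = 1 :=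
  Subtype.ext (show kWp bW true = 1 by rw [W_b_data.2 true]; rfl)

lemma Rhat_a : Rhat aW = Multiplicative.ofAdd 1 := by
  show Multiplicative.ofAdd (if sW aW then 1 else 0) = Multiplicative.ofAdd 1
  rw [W_a_data.1]
  rfl

lemma Rhat_b : Rhat bW = 1 := by
  show Multiplicative.ofAdd (if sW bW then 1 else 0) = 1
  rw [W_b_data.1]
  rfl

lemma Theta_a : Theta aW = Abelianization.of bG := by
  show Abelianization.of (kW aW false) * Abelianization.of (kW aW true) = _
  rw [kW_a_false, kW_a_true, map_one, one_mul]

lemma Theta_b : Theta bW = Abelianization.of aG := by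
  show Abelianization.of (kW bW false) * Abelianization.of (kW bW true) = _
  rw [kW_b_false, kW_b_true, map_one, mul_one]

lemma map_commutator_top : Subgroup.map Gam.subtype (commutator ↥Gam) = GamDer := by
  rw [commutator_def, Subgroup.map_commutator, ← MonoidHom.range_eq_map, Subgroup.range_subtype]
  rfl

lemma of_eq_one_iff (u : ↥Gam) :
    Abelianization.of u = 1 ↔ (u : Equiv.Perm (List Bool)) ∈ GamDer := by
  have h1 : Abelianization.of u = 1 ↔ u ∈ commutator ↥Gam := QuotientGroup.eq_one_iff u
  have h2 : Gam.subtype u ∈ Subgroup.map Gam.subtype (commutator ↥Gam) ↔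
      u ∈ commutator ↥Gam := Subgroup.mem_map_iff_mem (Subgroup.subtype_injective Gam)
  rw [h1, ← h2, map_commutator_top]
  rfl

/-- the relation subgroup of the abelianization. -/
def Rel (m n : ℤ) : Prop :=
  (Abelianization.of aG) ^ m * (Abelianization.of bG) ^ n = 1

lemma rel_mem {m n : ℤ} (h : Rel m n) : a ^ m * b ^ n ∈ GamDer := by
  have h1 : Abelianization.of (aG ^ m * bG ^ n) = 1 := by
    rw [map_mul, map_zpow, map_zpow]; exact h
  have h2 := (of_eq_one_iff _).1 h1
  simpa [aG, bG] using h2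

lemma mem_rel {m n : ℤ} (h : a ^ m * b ^ n ∈ GamDer) : Rel m n := by
  have h1 : ((aG ^ m * bG ^ n : ↥Gam) : Equiv.Perm (List Bool)) ∈ GamDer := by
    simpa [aG, bG] using h
  have h2 := (of_eq_one_iff _).2 h1
  rwa [map_mul, map_zpow, map_zpow] at h2

lemma coe_pow_W {m n : ℤ} (hw : a ^ m * b ^ n ∈ W) :
    (⟨a ^ m * b ^ n, hw⟩ : ↥W) = aW ^ m * bW ^ n :=
  Subtype.ext (by push_cast [aW, bW]; rfl)

lemma rel_even {m n : ℤ} (h : Rel m n) : Even m := by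
  obtain ⟨hw, hval⟩ := killed gam_le_W Rhat (rel_mem h)
  rw [coe_pow_W hw, map_mul, map_zpow, map_zpow, Rhat_a, Rhat_b, one_zpow, mul_one,
    ← ofAdd_zsmul] at hval
  have h2 : (m : ZMod 2) = 0 := by
    have h3 := congrArg Multiplicative.toAdd hval
    simpa [zsmul_one] using h3
  obtain ⟨k, hk⟩ := (ZMod.intCast_zmod_eq_zero_iff_dvd m 2).1 h2
  exact ⟨k, by omega⟩

lemma rel_swap {m n : ℤ} (h : Rel m n) : Rel n m := by
  obtain ⟨hw, hval⟩ := killed gam_le_W Theta (rel_mem h)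
  rw [coe_pow_W hw, map_mul, map_zpow, map_zpow, Theta_a, Theta_b] at hval
  rw [Rel, mul_comm]
  exact hval

/-- the cyclic subgroup of `A` generated by the class of `a` -/
def Za : Subgroup A := Subgroup.zpowers (Abelianization.of aG)

/-- the projection `A → A/⟨ā⟩` -/
noncomputable def qmk : A →* A ⧸ Za := QuotientGroup.mk' Za

lemma kW_mul (g h : ↥W) (y : Bool) :
    kW (g * h) y = kW g y * kW h (xor (sW g) y) := Subtype.ext ((W_mul_data g h).2 y)

lemma kW_inv (g : ↥W) (y : Bool) :
    kW g⁻¹ y = (kW g (xor (sW g) y))⁻¹ := Subtype.ext ((W_inv_data g).2 y)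

/-- difference of the section classes -/
noncomputable def dA (g : ↥W) : A :=
  Abelianization.of (kW g false) * (Abelianization.of (kW g true))⁻¹

lemma dA_mul (g h : ↥W) :
    dA (g * h) = if sW g then dA g * (dA h)⁻¹ else dA g * dA h := by
  simp only [dA, kW_mul, map_mul]
  cases hs : sW g
  · simp [mul_inv_rev, mul_comm, mul_left_comm, mul_assoc]
  · simp [mul_inv_rev, mul_comm, mul_left_comm, mul_assoc]

lemma dA_inv (g : ↥W) :
    dA g⁻¹ = if sW g then dA g else (dA g)⁻¹ := by
  simp only [dA, kW_inv, map_inv]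
  cases hs : sW g
  · simp [mul_inv_rev, mul_comm, mul_left_comm, mul_assoc]
  · simp [mul_inv_rev, mul_comm, mul_left_comm, mul_assoc]

lemma dA_a : dA aW = (Abelianization.of bG)⁻¹ := by
  rw [dA, kW_a_false, kW_a_true, map_one, one_mul]

lemma dA_b : dA bW = Abelianization.of aG := by
  rw [dA, kW_b_false, kW_b_true, map_one, inv_one, mul_one]

lemma qmk_of_a : qmk (Abelianization.of aG) = 1 :=
  (QuotientGroup.eq_one_iff _).2 (Subgroup.mem_zpowers _)

/-- key fact: for `g ∈ Γ`, the difference of the section classes is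
`-b̄` or `0` mod `⟨ā⟩`, according to the root action. -/
lemma dfact (g : ↥W) (hg : (g : Equiv.Perm (List Bool)) ∈ Gam) :
    qmk (dA g) = if sW g then (qmk (Abelianization.of bG))⁻¹ else 1 := by
  have hg' : (g : Equiv.Perm (List Bool)) ∈ Subgroup.closure {a, b} := hg
  have main : ∀ (x : Equiv.Perm (List Bool)), x ∈ Subgroup.closure {a, b} →
      ∀ hw : x ∈ W, qmk (dA ⟨x, hw⟩) =
        if sW (⟨x, hw⟩ : ↥W) then (qmk (Abelianization.of bG))⁻¹ else 1 := by
    intro x hx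
    induction hx using Subgroup.closure_induction with
    | mem x hmem =>
      rcases hmem with rfl | rfl
      · intro hw
        have e : (⟨a, hw⟩ : ↥W) = aW := rfl
        rw [e, dA_a, W_a_data.1, if_pos rfl, map_inv]
      · intro hw
        have e : (⟨b, hw⟩ : ↥W) = bW := rfl
        rw [e, dA_b, W_b_data.1, if_neg (by simp), qmk_of_a]
    | one =>
      intro hw
      have e : (⟨(1 : Equiv.Perm (List Bool)), hw⟩ : ↥W) = 1 := rfl
      rw [e, W_one_data.1, if_neg (by simp)]
      have e2 : dA (1 : ↥W) = 1 := by
        have h : ∀ y, kW (1 : ↥W) y = 1 := fun y => Subtype.ext (W_one_data.2 y)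
        rw [dA, h, h, map_one, inv_one, mul_one]
      rw [e2, map_one]
    | mul x y hxc hyc ihx ihy =>
      intro hw
      have hxw : x ∈ W := gam_le_W hxc
      have hyw : y ∈ W := gam_le_W hyc
      have e : (⟨x * y, hw⟩ : ↥W) = (⟨x, hxw⟩ : ↥W) * ⟨y, hyw⟩ := rfl
      rw [e, dA_mul, (W_mul_data (⟨x, hxw⟩ : ↥W) ⟨y, hyw⟩).1]
      cases h1 : sW (⟨x, hxw⟩ : ↥W) <;> cases h2 : sW (⟨y, hyw⟩ : ↥W) <;>
        simp [ihx hxw, ihy hyw, h1, h2]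
    | inv x hxc ihx =>
      intro hw
      have hxw : x ∈ W := gam_le_W hxc
      have e : (⟨x⁻¹, hw⟩ : ↥W) = (⟨x, hxw⟩ : ↥W)⁻¹ := rfl
      rw [e, dA_inv, (W_inv_data (⟨x, hxw⟩ : ↥W)).1]
      cases h1 : sW (⟨x, hxw⟩ : ↥W) <;> simp [ihx hxw, h1]
  have := main g.1 hg' g.2
  simpa using this

lemma comm_aux0 {M : Type*} [CommGroup M] (u1 u2 : M) : u1 * u2 * u1⁻¹ * u2⁻¹ = 1 := by
  rw [mul_right_comm u1 u2 u1⁻¹]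
  simp

lemma comm_aux {M : Type*} [CommGroup M] {u1 v1 u2 v2 : M} (h : u1 * v1⁻¹ = u2 * v2⁻¹) :
    u1 * v2 * v1⁻¹ * u2⁻¹ = 1 := by
  rw [mul_right_comm u1 v2 v1⁻¹, h]
  group

lemma sW_mul (g h : ↥W) : sW (g * h) = xor (sW g) (sW h) := (W_mul_data g h).1
lemma sW_inv (g : ↥W) : sW g⁻¹ = sW g := (W_inv_data g).1

/-- the level-one stabilizer (with sections in `Γ`) -/
def Stab : Subgroup (Equiv.Perm (List Bool)) where
  carrier := {g | ∃ k : Bool → Equiv.Perm (List Bool),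
      (∀ x, k x ∈ Gam) ∧ ∀ x w, g (x :: w) = x :: k x w}
  one_mem' := ⟨fun _ => 1, fun _ => one_mem _, by intro x w; simp⟩
  mul_mem' := by
    rintro g h ⟨k, hkG, hk⟩ ⟨k', hk'G, hk'⟩
    exact ⟨fun x => k x * k' x, fun x => mul_mem (hkG x) (hk'G x), fun x w => by
      rw [Equiv.Perm.mul_apply, hk' x w, hk, Equiv.Perm.mul_apply]⟩
  inv_mem' := by
    rintro g ⟨k, hkG, hk⟩
    refine ⟨fun x => (k x)⁻¹, fun x => inv_mem (hkG x), fun x w => ?_⟩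
    apply g.injective
    rw [← Equiv.Perm.mul_apply, mul_inv_cancel, Equiv.Perm.one_apply, hk]
    simp

lemma mem_Stab {g : Equiv.Perm (List Bool)} (h : g ∈ Stab) :
    ∃ k : Bool → Equiv.Perm (List Bool),
      (∀ x, k x ∈ Gam) ∧ ∀ x w, g (x :: w) = x :: k x w := h

/-- sections of a stabilizer element -/
noncomputable def kSp (g : ↥Stab) : Bool → Equiv.Perm (List Bool) := (mem_Stab g.2).choose
lemma kSp_mem (g : ↥Stab) (x : Bool) : kSp g x ∈ Gam := (mem_Stab g.2).choose_spec.1 x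
lemma Stab_spec (g : ↥Stab) (x : Bool) (w : List Bool) :
    (g : Equiv.Perm (List Bool)) (x :: w) = x :: kSp g x w :=
  (mem_Stab g.2).choose_spec.2 x w
noncomputable def kS (g : ↥Stab) (x : Bool) : ↥Gam := ⟨kSp g x, kSp_mem g x⟩

lemma Stab_unique (g : ↥Stab) {k : Bool → Equiv.Perm (List Bool)}
    (hk : ∀ x w, (g : Equiv.Perm (List Bool)) (x :: w) = x :: k x w) (y : Bool) :
    kSp g y = k y := by
  apply Equiv.ext
  intro w
  have h1 := Stab_spec g y w
  rw [hk] at h1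
  injection h1 with _ h
  exact h.symm

lemma kS_mul (g h : ↥Stab) (y : Bool) : kS (g * h) y = kS g y * kS h y :=
  Subtype.ext (Stab_unique (g * h) (k := fun x => kSp g x * kSp h x) (fun x w => by
    rw [Subgroup.coe_mul, Equiv.Perm.mul_apply, Stab_spec h, Stab_spec g,
      Equiv.Perm.mul_apply]) y)

/-- first section class mod `⟨ā⟩`: a homomorphism on the stabilizer. -/
noncomputable def kap : ↥Stab →* A ⧸ Za where
  toFun g := qmk (Abelianization.of (kS g false))
  map_one' := by
    have h : kS (1 : ↥Stab) false = 1 :=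
      Subtype.ext (Stab_unique 1 (k := fun _ => 1) (fun x w => by simp) false)
    show qmk (Abelianization.of (kS (1 : ↥Stab) false)) = 1
    rw [h, map_one, map_one]
  map_mul' g h := by
    show qmk (Abelianization.of (kS (g * h) false)) = _
    rw [kS_mul, map_mul, map_mul]

lemma stab_W_data {g : Equiv.Perm (List Bool)} (hs : g ∈ Stab) (hw : g ∈ W) :
    sW ⟨g, hw⟩ = false ∧ ∀ y, kWp ⟨g, hw⟩ y = kSp ⟨g, hs⟩ y :=
  W_unique _ (fun x w => by
    rw [show ((⟨g, hw⟩ : ↥W) : Equiv.Perm (List Bool)) = g from rfl,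
      Stab_spec ⟨g, hs⟩ x w]
    cases x <;> rfl)

lemma kap_killed {g : Equiv.Perm (List Bool)} (hg : g ∈ GamDer) :
    ∃ hs : g ∈ Stab, kap ⟨g, hs⟩ = 1 := by
  have hle : GamDer ≤ Subgroup.map Stab.subtype (MonoidHom.ker kap) := by
    rw [GamDer, Subgroup.commutator_le]
    intro g1 h1 g2 h2
    set G1 : ↥W := ⟨g1, gam_le_W h1⟩ with hG1
    set G2 : ↥W := ⟨g2, gam_le_W h2⟩ with hG2
    have hTdef : (⁅G1, G2⁆ : ↥W) = G1 * G2 * G1⁻¹ * G2⁻¹ := commutatorElement_def G1 G2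
    -- root of the commutator is trivial
    have hsT : sW ⁅G1, G2⁆ = false := by
      rw [hTdef]
      simp only [sW_mul, sW_inv]
      cases sW G1 <;> cases sW G2 <;> rfl
    -- the commutator is in the stabilizer
    have hTS : ⁅g1, g2⁆ ∈ Stab := by
      refine ⟨fun y => kWp ⁅G1, G2⁆ y, fun y => kWp_mem _ y, fun x w => ?_⟩
      have h3 := W_spec ⁅G1, G2⁆ x w
      rw [hsT] at h3
      simp only [Bool.false_xor] at h3
      exact h3
    refine Subgroup.mem_map.2 ⟨⟨⁅g1, g2⁆, hTS⟩, ?_, rfl⟩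
    rw [MonoidHom.mem_ker]
    show qmk (Abelianization.of (kS (⟨⁅g1, g2⁆, hTS⟩ : ↥Stab) false)) = 1
    have hkk : kS (⟨⁅g1, g2⁆, hTS⟩ : ↥Stab) false = kW ⁅G1, G2⁆ false :=
      Subtype.ext ((stab_W_data hTS (⁅G1, G2⁆ : ↥W).2).2 false).symm
    rw [hkk]
    have hexp : kW ⁅G1, G2⁆ false
        = kW G1 false * kW G2 (xor (sW G1) false)
          * (kW G1 (xor (sW G1) (xor (xor (sW G1) (sW G2)) false)))⁻¹
          * (kW G2 (xor (sW G2) (xor (sW G2) false)))⁻¹ := by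
      rw [hTdef]
      rw [kW_mul, kW_mul, kW_mul, kW_inv, kW_inv]
      simp only [sW_mul, sW_inv]
      cases sW G1 <;> cases sW G2 <;> rfl
    have d1 := dfact G1 h1
    have d2 := dfact G2 h2
    rw [dA, map_mul, map_inv] at d1 d2
    rw [hexp]
    simp only [map_mul, map_inv]
    cases hs1 : sW G1 <;> cases hs2 : sW G2 <;>
      simp only [hs1, hs2, Bool.xor_false, Bool.xor_true, Bool.false_xor, Bool.true_xor,
        Bool.not_false, Bool.not_true, reduceIte] at d1 d2 ⊢
    · exact comm_aux0 _ _
    · rw [mul_inv_eq_one.mp d1]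
      exact comm_aux0 _ _
    · rw [mul_inv_eq_one.mp d2]
      exact comm_aux0 _ _
    · exact comm_aux (d1.trans d2.symm)
  obtain ⟨w, hwker, hweq⟩ := hle hg
  have hs : g ∈ Stab := hweq ▸ w.2
  refine ⟨hs, ?_⟩
  have hsub : (⟨g, hs⟩ : ↥Stab) = w := Subtype.ext hweq.symm
  rw [hsub]
  exact hwker

lemma a2_mem_Stab : a * a ∈ Stab := by
  refine ⟨fun _ => b, fun _ => b_mem, fun x w => ?_⟩
  cases x <;> simp [Equiv.Perm.mul_apply, a_false, a_true]

lemma b_mem_Stab : b ∈ Stab := by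
  refine ⟨fun x => if x then 1 else a, fun x => by cases x <;> simp [a_mem, one_mem],
    fun x w => ?_⟩
  cases x <;> simp [b_false, b_true]

/-- `a²` as a stabilizer element -/
def a2S : ↥Stab := ⟨a * a, a2_mem_Stab⟩
/-- `b` as a stabilizer element -/
def bS : ↥Stab := ⟨b, b_mem_Stab⟩

lemma kS_a2S : kS a2S false = bG :=
  Subtype.ext (Stab_unique a2S (k := fun _ => b)
    (fun x w => by cases x <;> simp [a2S, Equiv.Perm.mul_apply, a_false, a_true]) false)

lemma kS_bS : kS bS false = aG :=
  Subtype.ext (Stab_unique bS (k := fun x => if x then 1 else a)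
    (fun x w => by cases x <;> simp [bS, b_false, b_true]) false)

lemma kap_a2S : kap a2S = qmk (Abelianization.of bG) := by
  show qmk (Abelianization.of (kS a2S false)) = _
  rw [kS_a2S]

lemma kap_bS : kap bS = 1 := by
  show qmk (Abelianization.of (kS bS false)) = 1
  rw [kS_bS, qmk_of_a]

lemma rel_half {m' n : ℤ} (h : Rel (2 * m') n) : ∃ k : ℤ, Rel k m' := by
  have ht : a ^ (2 * m') * b ^ n ∈ GamDer := rel_mem h
  obtain ⟨hs, hval⟩ := kap_killed ht
  have hcoe : (⟨a ^ (2 * m') * b ^ n, hs⟩ : ↥Stab) = a2S ^ m' * bS ^ n := by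
    apply Subtype.ext
    push_cast [a2S, bS]
    rw [zpow_mul]
    norm_num
    rw [pow_two]
  rw [hcoe, map_mul, map_zpow, map_zpow, kap_a2S, kap_bS, one_zpow, mul_one,
    ← map_zpow, ← map_zpow] at hval
  have hmem : (Abelianization.of bG) ^ m' ∈ Za := (QuotientGroup.eq_one_iff _).1 hval
  obtain ⟨k, hk⟩ := Subgroup.mem_zpowers_iff.1 hmem
  refine ⟨-k, ?_⟩
  rw [Rel, ← hk, ← zpow_add]
  simp

lemma rel_dvd (s : ℕ) : ∀ m n : ℤ, Rel m n → (2 ^ s : ℤ) ∣ m ∧ (2 ^ s : ℤ) ∣ n := by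
  induction s with
  | zero => intro m n _; simp
  | succ s ih =>
    have step : ∀ m n : ℤ, Rel m n → (2 ^ (s + 1) : ℤ) ∣ m := by
      intro m n h
      obtain ⟨m', hm'⟩ := rel_even h
      have h2 : Rel (2 * m') n := by
        rw [show (2 : ℤ) * m' = m by omega]
        exact h
      obtain ⟨k, hk⟩ := rel_half h2
      obtain ⟨j, hj⟩ := (ih k m' hk).2
      exact ⟨j, by rw [show m = 2 * m' by omega, hj, pow_succ]; ring⟩
    intro m n h
    exact ⟨step m n h, step n m (rel_swap h)⟩

lemma rel_zero {m n : ℤ} (h : Rel m n) : m = 0 ∧ n = 0 := by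
  have key : ∀ p : ℤ, (∀ s : ℕ, (2 ^ s : ℤ) ∣ p) → p = 0 := by
    intro p hp
    by_contra hp0
    have h1 : (2 ^ p.natAbs : ℤ) ∣ |p| := (dvd_abs _ _).2 (hp p.natAbs)
    have h2 : (2 ^ p.natAbs : ℤ) ≤ |p| := Int.le_of_dvd (abs_pos.2 hp0) h1
    have h3 : |p| < 2 ^ p.natAbs := by
      have := Nat.lt_two_pow_self (n := p.natAbs)
      calc |p| = (p.natAbs : ℤ) := (Int.abs_eq_natAbs p)
        _ < (2 ^ p.natAbs : ℤ) := by exact_mod_cast this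
    omega
  exact ⟨key m fun s => (rel_dvd s m n h).1, key n fun s => (rel_dvd s m n h).2⟩

/-- the homomorphism `ℤ² → A` -/
noncomputable def psi : Multiplicative ℤ × Multiplicative ℤ →* A :=
  ((zpowersHom A) (Abelianization.of aG)).coprod ((zpowersHom A) (Abelianization.of bG))

lemma psi_apply (x y : Multiplicative ℤ) :
    psi (x, y) = (Abelianization.of aG) ^ x.toAdd * (Abelianization.of bG) ^ y.toAdd := rfl

lemma psi_injective : Function.Injective psi := by
  rw [← MonoidHom.ker_eq_bot_iff, eq_bot_iff]
  rintro ⟨x, y⟩ hxy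
  rw [MonoidHom.mem_ker, psi_apply] at hxy
  obtain ⟨h1, h2⟩ := rel_zero hxy
  rw [Subgroup.mem_bot, Prod.ext_iff]
  constructor
  · exact Multiplicative.toAdd.injective h1
  · exact Multiplicative.toAdd.injective h2

lemma top_gam : (⊤ : Subgroup ↥Gam) = Subgroup.closure {aG, bG} := by
  apply Subgroup.map_injective (Subgroup.subtype_injective Gam)
  rw [MonoidHom.map_closure, ← MonoidHom.range_eq_map, Subgroup.range_subtype]
  rw [Set.image_insert_eq, Set.image_singleton]
  rfl

lemma psi_surjective : Function.Surjective psi := by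
  intro x
  have hgen : x ∈ Subgroup.closure {Abelianization.of aG, Abelianization.of bG} := by
    have hx : ∃ z : ↥Gam, Abelianization.of z = x := by
      induction x using QuotientGroup.induction_on with
      | H z => exact ⟨z, rfl⟩
    obtain ⟨z, rfl⟩ := hx
    have hz : z ∈ Subgroup.closure {aG, bG} := by rw [← top_gam]; trivial
    have himg := Subgroup.mem_map_of_mem (Abelianization.of (G := ↥Gam)) hz
    rw [MonoidHom.map_closure, Set.image_insert_eq, Set.image_singleton] at himg
    exact himg
  have hle : Subgroup.closure {Abelianization.of aG, Abelianization.of bG} ≤ psi.range := by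
    rw [Subgroup.closure_le]
    rintro t (rfl | rfl)
    · exact ⟨(Multiplicative.ofAdd 1, 1), by simp [psi_apply]⟩
    · exact ⟨(1, Multiplicative.ofAdd 1), by simp [psi_apply]⟩
  obtain ⟨p, hp⟩ := hle hgen
  exact ⟨p, hp⟩

/-- the isomorphism `ℤ² ≃ A` -/
noncomputable def psiE : (Multiplicative ℤ × Multiplicative ℤ) ≃* A :=
  MulEquiv.ofBijective psi ⟨psi_injective, psi_surjective⟩

/-- the first coordinate of the abelianization -/
noncomputable def alpha : A →* Multiplicative ℤ :=
  (MonoidHom.fst _ _).comp psiE.symm.toMonoidHom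

lemma alpha_a : alpha (Abelianization.of aG) = Multiplicative.ofAdd 1 := by
  have h : psiE (Multiplicative.ofAdd 1, 1) = Abelianization.of aG := by
    show psi _ = _
    simp [psi_apply]
  rw [alpha, MonoidHom.comp_apply, ← h, MulEquiv.coe_toMonoidHom, MulEquiv.symm_apply_apply]
  rfl

lemma gamder_le_stab : GamDer ≤ Stab := fun _ hg => (kap_killed hg).1

/-- the first-section homomorphism on the stabilizer -/
noncomputable def kShom : ↥Stab →* ↥Gam where
  toFun g := kS g false
  map_one' := Subtype.ext (Stab_unique 1 (k := fun _ => 1) (fun x w => by simp) false)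
  map_mul' g h := kS_mul g h false

/-- the homomorphism `Γ' → ℤ` realizing the quotient by `L` -/
noncomputable def phi : ↥GamDer →* Multiplicative ℤ :=
  alpha.comp ((Abelianization.of).comp (kShom.comp (Subgroup.inclusion gamder_le_stab)))

lemma phi_apply (g : ↥GamDer) :
    phi g = alpha (Abelianization.of (kS (Subgroup.inclusion gamder_le_stab g) false)) := rfl

lemma theta_sections (g : ↥Stab) (ht : (g : Equiv.Perm (List Bool)) ∈ GamDer) :
    Abelianization.of (kS g false) * Abelianization.of (kS g true) = 1 := by
  obtain ⟨hw, hval⟩ := killed gam_le_W Theta ht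
  have e : ∀ y, kW ⟨(g : Equiv.Perm (List Bool)), hw⟩ y = kS g y := fun y =>
    Subtype.ext (by
      have h := (stab_W_data g.2 hw).2 y
      have hgg : (⟨(g : Equiv.Perm (List Bool)), g.2⟩ : ↥Stab) = g := Subtype.ext rfl
      rw [hgg] at h
      exact h)
  have hθ : Theta ⟨(g : Equiv.Perm (List Bool)), hw⟩
      = Abelianization.of (kS g false) * Abelianization.of (kS g true) := by
    show Abelianization.of (kW ⟨(g : Equiv.Perm (List Bool)), hw⟩ false)
      * Abelianization.of (kW ⟨(g : Equiv.Perm (List Bool)), hw⟩ true) = _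
    rw [e false, e true]
  rw [← hθ]
  exact hval

lemma a_inv_false (w : List Bool) : a⁻¹ (false :: w) = true :: w := rfl
lemma a_inv_true (w : List Bool) : a⁻¹ (true :: w) = false :: b⁻¹ w := rfl
lemma b_inv_false (w : List Bool) : b⁻¹ (false :: w) = false :: a⁻¹ w := rfl
lemma b_inv_true (w : List Bool) : b⁻¹ (true :: w) = true :: w := rfl

lemma cc_sections (hs : cc ∈ Stab) : kS ⟨cc, hs⟩ false = aG :=
  Subtype.ext (Stab_unique ⟨cc, hs⟩ (k := fun x => if x then a⁻¹ else a)
    (fun x w => by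
      cases x <;>
        simp [cc, Equiv.Perm.mul_apply, a_false, a_true, b_false, b_true,
          a_inv_false, a_inv_true, b_inv_false, b_inv_true]) false)

lemma phi_cc : phi ⟨cc, cc_mem_GamDer⟩ = Multiplicative.ofAdd 1 := by
  have hs : cc ∈ Stab := gamder_le_stab cc_mem_GamDer
  have e : Subgroup.inclusion gamder_le_stab (⟨cc, cc_mem_GamDer⟩ : ↥GamDer)
      = (⟨cc, hs⟩ : ↥Stab) := Subtype.ext rfl
  rw [phi_apply, e, cc_sections hs, alpha_a]

lemma ker_phi : MonoidHom.ker phi = Lsub := by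
  ext g
  constructor
  · intro hker
    rw [MonoidHom.mem_ker] at hker
    have hgder : (g : Equiv.Perm (List Bool)) ∈ GamDer := g.2
    set gS : ↥Stab := Subgroup.inclusion gamder_le_stab g with hgSdef
    obtain ⟨hs, hval⟩ := kap_killed hgder
    have hgseq : (⟨(g : Equiv.Perm (List Bool)), hs⟩ : ↥Stab) = gS := Subtype.ext rfl
    rw [show kap ⟨(g : Equiv.Perm (List Bool)), hs⟩
      = qmk (Abelianization.of (kS (⟨(g : Equiv.Perm (List Bool)), hs⟩ : ↥Stab) false))
      from rfl, hgseq] at hval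
    have hmem : Abelianization.of (kS gS false) ∈ Za := (QuotientGroup.eq_one_iff _).1 hval
    obtain ⟨k, hk⟩ := Subgroup.mem_zpowers_iff.1 hmem
    have hphi : phi g = Multiplicative.ofAdd k := by
      rw [phi_apply, ← hgSdef, ← hk, map_zpow, alpha_a, ← ofAdd_zsmul, smul_eq_mul, mul_one]
    have hk0 : k = 0 := by
      rw [hker] at hphi
      exact Multiplicative.toAdd.injective hphi.symm
    have hfalse1 : Abelianization.of (kS gS false) = 1 := by
      rw [← hk, hk0, zpow_zero]
    have hf : (kS gS false : Equiv.Perm (List Bool)) ∈ GamDer := (of_eq_one_iff _).1 hfalse1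
    have hθ := theta_sections gS (by
      rw [show (gS : Equiv.Perm (List Bool)) = (g : Equiv.Perm (List Bool)) from rfl]
      exact hgder)
    rw [hfalse1, one_mul] at hθ
    have htmem : (kS gS true : Equiv.Perm (List Bool)) ∈ GamDer := (of_eq_one_iff _).1 hθ
    intro x
    cases x
    · exact ⟨kSp gS false, hf, fun w => Stab_spec gS false w⟩
    · exact ⟨kSp gS true, htmem, fun w => Stab_spec gS true w⟩
  · intro hl
    rw [MonoidHom.mem_ker, phi_apply]
    obtain ⟨k0, hk0der, hk0⟩ := hl false
    set gS : ↥Stab := Subgroup.inclusion gamder_le_stab g with hgSdef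
    have hsec : kSp gS false = k0 := by
      apply Equiv.ext
      intro w
      have h1 := Stab_spec gS false w
      rw [show (gS : Equiv.Perm (List Bool)) = (g : Equiv.Perm (List Bool)) from rfl,
        hk0 w] at h1
      injection h1 with _ h
      exact h.symm
    have h2 : Abelianization.of (kS gS false) = 1 :=
      (of_eq_one_iff _).2 (by
        rw [show (kS gS false : Equiv.Perm (List Bool)) = k0 from hsec]
        exact hk0der)
    rw [h2, map_one]
/-- `L` is a normal subgroup of `Γ'`, and `Γ'/L` is infinite cyclic generated
by the image of `c = [a,b]` (expressed by a surjection `Γ' → ℤ` with kernel `L`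
sending `c` to `1`). -/
theorem GamDer_quotient_infinite_cyclic :
    Lsub.Normal ∧
    ∃ φ : ↥GamDer →* Multiplicative ℤ, Function.Surjective φ ∧
      MonoidHom.ker φ = Lsub ∧ φ ⟨cc, cc_mem_GamDer⟩ = Multiplicative.ofAdd 1 := by
  have hker : MonoidHom.ker phi = Lsub := ker_phi
  constructor
  · rw [← hker]
    exact MonoidHom.normal_ker phi
  refine ⟨phi, ?_, hker, phi_cc⟩
  intro z
  refine ⟨(⟨cc, cc_mem_GamDer⟩ : ↥GamDer) ^ z.toAdd, ?_⟩
  rw [map_zpow, phi_cc, ← ofAdd_zsmul, smul_eq_mul, mul_one]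
  rfl

end PinkGroup
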